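/- If P(Y=1, M=0 | X=1) + P(Y=0, M=0 | X=0) > 1, then the set of ω ∈ Ω satisfying: M1(ω)=M0(ω)=0, Y1(ω)−Y0(ω)=1, Y_{1,M1(ω)}(ω) − Y_{0,M0(ω)}(ω) = 1, Y_{1,M1(ω)}(ω) − Y_{0,M1(ω)}(ω) = 1, Y_{1,M0(ω)}(ω) − Y_{0,M0(ω)}(ω) = 1, Y_{1,M1(ω)}(ω) − Y_{1,M0(ω)}(ω) = 0 and Y_{0,M1(ω)}(ω) − Y_{0,M0(ω)}(ω) = 0, has positive μ-measure. That is, for such ω the total effect, total direct effect, pure direct effect, and principal stratum direct effect (with M1(ω)=M0(ω)=0) all equal 1, while the total indirect and pure indirect effects are both 0. -/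

import Mathlib

open MeasureTheory ProbabilityTheory

/-- Conditional probability `P(A | B) = mu(A ∩ B) / mu(B)` as a real number. -/
noncomputable def condP {Ω : Type*} [MeasurableSpace Ω] (μ : Measure Ω)
    (A B : Set Ω) : ℝ :=
  (μ (A ∩ B)).toReal / (μ B).toReal

theorem statement1
    {Ω : Type*} [MeasurableSpace Ω] (μ : Measure Ω) [IsProbabilityMeasure μ]
    (Y1 Y0 M1 M0 X Y M : Ω → ℕ)
    (hY1meas : Measurable Y1) (hY0meas : Measurable Y0)
    (hM1meas : Measurable M1) (hM0meas : Measurable M0)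
    (hXmeas : Measurable X)
    (hY1bin : ∀ ω, Y1 ω ≤ 1) (hY0bin : ∀ ω, Y0 ω ≤ 1)
    (hM1bin : ∀ ω, M1 ω ≤ 1) (hM0bin : ∀ ω, M0 ω ≤ 1)
    (hXbin : ∀ ω, X ω ≤ 1)
    (hXpos : 0 < μ {ω | X ω = 1}) (hXlt : μ {ω | X ω = 1} < 1)
    (hindep : IndepFun X (fun ω => (Y1 ω, Y0 ω, M1 ω, M0 ω)) μ)
    (hYcons1 : ∀ ω, X ω = 1 → Y ω = Y1 ω)
    (hYcons0 : ∀ ω, X ω = 0 → Y ω = Y0 ω)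
    (hMcons1 : ∀ ω, X ω = 1 → M ω = M1 ω)
    (hMcons0 : ∀ ω, X ω = 0 → M ω = M0 ω)
    (Ynest : ℕ → ℕ → Ω → ℕ)
    (hYnestmeas : ∀ x m', Measurable (Ynest x m'))
    (hYnestbin : ∀ x m' ω, Ynest x m' ω ≤ 1)
    (hcomp1 : ∀ ω, Ynest 1 (M1 ω) ω = Y1 ω)
    (hcomp0 : ∀ ω, Ynest 0 (M0 ω) ω = Y0 ω)
    (hemp : condP μ {ω | Y ω = 1 ∧ M ω = 0} {ω | X ω = 1}
        + condP μ {ω | Y ω = 0 ∧ M ω = 0} {ω | X ω = 0} > 1) :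
    0 < μ {ω | M1 ω = 0 ∧ M0 ω = 0 ∧ (Y1 ω : ℤ) - (Y0 ω : ℤ) = 1 ∧
      (Ynest 1 (M1 ω) ω : ℤ) - (Ynest 0 (M0 ω) ω : ℤ) = 1 ∧
      (Ynest 1 (M1 ω) ω : ℤ) - (Ynest 0 (M1 ω) ω : ℤ) = 1 ∧
      (Ynest 1 (M0 ω) ω : ℤ) - (Ynest 0 (M0 ω) ω : ℤ) = 1 ∧
      (Ynest 1 (M1 ω) ω : ℤ) - (Ynest 1 (M0 ω) ω : ℤ) = 0 ∧
      (Ynest 0 (M1 ω) ω : ℤ) - (Ynest 0 (M0 ω) ω : ℤ) = 0} := by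
  set V : Ω → ℕ × ℕ × ℕ × ℕ := fun ω => (Y1 ω, Y0 ω, M1 ω, M0 ω) with hV
  set A : Set Ω := {ω | Y1 ω = 1 ∧ M1 ω = 0} with hA
  set B : Set Ω := {ω | Y0 ω = 0 ∧ M0 ω = 0} with hB
  have hX0 : μ {ω | X ω = 0} ≠ 0 := by
    intro h0
    have hcompl : {ω | X ω = 0} = {ω | X ω = 1}ᶜ := by
      ext ω
      have := hXbin ω
      simp only [Set.mem_setOf_eq, Set.mem_compl_iff]
      omega
    rw [hcompl, measure_compl (s := {ω | X ω = 1})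
        (hXmeas (measurableSet_singleton 1)) (measure_ne_top μ _),
      measure_univ] at h0
    exact absurd (tsub_eq_zero_iff_le.mp h0) (not_le.mpr hXlt)
  -- A ∩ {X=1} = {Y=1 ∧ M=0} ∩ {X=1}
  have hAeq : {ω | Y ω = 1 ∧ M ω = 0} ∩ {ω | X ω = 1} = A ∩ {ω | X ω = 1} := by
    ext ω
    simp only [Set.mem_inter_iff, Set.mem_setOf_eq, hA]
    constructor
    · rintro ⟨⟨hy, hm⟩, hx⟩
      exact ⟨⟨(hYcons1 ω hx) ▸ hy, (hMcons1 ω hx) ▸ hm⟩, hx⟩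
    · rintro ⟨⟨hy, hm⟩, hx⟩
      exact ⟨⟨(hYcons1 ω hx).trans hy, (hMcons1 ω hx).trans hm⟩, hx⟩
  have hBeq : {ω | Y ω = 0 ∧ M ω = 0} ∩ {ω | X ω = 0} = B ∩ {ω | X ω = 0} := by
    ext ω
    simp only [Set.mem_inter_iff, Set.mem_setOf_eq, hB]
    constructor
    · rintro ⟨⟨hy, hm⟩, hx⟩
      exact ⟨⟨(hYcons0 ω hx) ▸ hy, (hMcons0 ω hx) ▸ hm⟩, hx⟩
    · rintro ⟨⟨hy, hm⟩, hx⟩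
      exact ⟨⟨(hYcons0 ω hx).trans hy, (hMcons0 ω hx).trans hm⟩, hx⟩
  -- independence factorization
  have hSA : MeasurableSet {p : ℕ × ℕ × ℕ × ℕ | p.1 = 1 ∧ p.2.2.1 = 0} := by
    have : {p : ℕ × ℕ × ℕ × ℕ | p.1 = 1 ∧ p.2.2.1 = 0}
        = (Prod.fst ⁻¹' {1}) ∩ ((fun p : ℕ × ℕ × ℕ × ℕ => p.2.2.1) ⁻¹' {0}) := rfl
    rw [this]
    exact (measurable_fst (measurableSet_singleton 1)).inter
      ((measurable_fst.comp (measurable_snd.comp measurable_snd))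
        (measurableSet_singleton 0))
  have hSB : MeasurableSet {p : ℕ × ℕ × ℕ × ℕ | p.2.1 = 0 ∧ p.2.2.2 = 0} := by
    have : {p : ℕ × ℕ × ℕ × ℕ | p.2.1 = 0 ∧ p.2.2.2 = 0}
        = ((fun p : ℕ × ℕ × ℕ × ℕ => p.2.1) ⁻¹' {0}) ∩
          ((fun p : ℕ × ℕ × ℕ × ℕ => p.2.2.2) ⁻¹' {0}) := rfl
    rw [this]
    exact ((measurable_fst.comp measurable_snd) (measurableSet_singleton 0)).inter
      ((measurable_snd.comp (measurable_snd.comp measurable_snd))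
        (measurableSet_singleton 0))
  have hfacA : μ (A ∩ {ω | X ω = 1}) = μ {ω | X ω = 1} * μ A := by
    have h := hindep.measure_inter_preimage_eq_mul {1}
      {p : ℕ × ℕ × ℕ × ℕ | p.1 = 1 ∧ p.2.2.1 = 0} (measurableSet_singleton 1) hSA
    have h1 : X ⁻¹' {1} = {ω | X ω = 1} := rfl
    have h2 : V ⁻¹' {p : ℕ × ℕ × ℕ × ℕ | p.1 = 1 ∧ p.2.2.1 = 0} = A := rfl
    rw [h1, h2] at h
    rw [Set.inter_comm]
    exact h
  have hfacB : μ (B ∩ {ω | X ω = 0}) = μ {ω | X ω = 0} * μ B := by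
    have h := hindep.measure_inter_preimage_eq_mul {0}
      {p : ℕ × ℕ × ℕ × ℕ | p.2.1 = 0 ∧ p.2.2.2 = 0} (measurableSet_singleton 0) hSB
    have h1 : X ⁻¹' {0} = {ω | X ω = 0} := rfl
    have h2 : V ⁻¹' {p : ℕ × ℕ × ℕ × ℕ | p.2.1 = 0 ∧ p.2.2.2 = 0} = B := rfl
    rw [h1, h2] at h
    rw [Set.inter_comm]
    exact h
  -- compute the condPs
  have hX1ne : μ {ω | X ω = 1} ≠ 0 := hXpos.ne'
  have hcA : condP μ {ω | Y ω = 1 ∧ M ω = 0} {ω | X ω = 1} = (μ A).toReal := by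
    rw [condP, hAeq, hfacA, ENNReal.toReal_mul, mul_comm, mul_div_assoc,
      div_self (ENNReal.toReal_ne_zero.mpr ⟨hX1ne, measure_ne_top μ _⟩), mul_one]
  have hcB : condP μ {ω | Y ω = 0 ∧ M ω = 0} {ω | X ω = 0} = (μ B).toReal := by
    rw [condP, hBeq, hfacB, ENNReal.toReal_mul, mul_comm, mul_div_assoc,
      div_self (ENNReal.toReal_ne_zero.mpr ⟨hX0, measure_ne_top μ _⟩), mul_one]
  rw [hcA, hcB] at hemp
  have hsum : 1 < μ A + μ B := by
    rw [← ENNReal.toReal_lt_toReal (by simp)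
      (ENNReal.add_ne_top.mpr ⟨measure_ne_top μ _, measure_ne_top μ _⟩),
      ENNReal.toReal_add (measure_ne_top μ _) (measure_ne_top μ _)]
    simpa using hemp
  have hBmeas : MeasurableSet B :=
    (hY0meas (measurableSet_singleton 0)).inter (hM0meas (measurableSet_singleton 0))
  have hABpos : 0 < μ (A ∩ B) := by
    by_contra h
    push_neg at h
    have h0 : μ (A ∩ B) = 0 := le_antisymm h zero_le
    have := measure_union_add_inter A hBmeas (μ := μ)
    rw [h0, add_zero] at this
    have hle : μ (A ∪ B) ≤ 1 := prob_le_one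
    rw [this] at hle
    exact absurd hsum (not_lt.mpr hle)
  refine lt_of_lt_of_le hABpos (measure_mono ?_)
  rintro ω ⟨⟨hy1, hm1⟩, hy0, hm0⟩
  have hc1 := hcomp1 ω
  have hc0 := hcomp0 ω
  rw [hm1, hy1] at hc1
  rw [hm0, hy0] at hc0
  simp only [Set.mem_setOf_eq, hm1, hm0, hc1, hc0, hy1, hy0]
  norm_num
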